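/- arXiv:2207.09134 — 6 statements merged into one kernel-verified Lean document; each statement's English description precedes it below -/
import Mathlib

section
/- Suppose h : ℕ → ℕ is a monotonically increasing function having the NS property, and let y, z ∈ ℕ with y ≤ h(z). Then the sets A = { y ⊕ (z−k) : k = 1, 2, …, z } and B = { min(y, h(z−k)) ⊕ (z−k) : k = 1, 2, …, z } are equal; equivalently, { y ⊕ w : w < z } = { min(y, h(w)) ⊕ w : w < z }. -/
/-- A function `h : ℕ → ℕ` has the NS property if whenever `⌊z/2^i⌋ = ⌊z'/2^i⌋`
for some `i ≥ 1`, we have `⌊h z/2^(i-1)⌋ = ⌊h z'/2^(i-1)⌋`. -/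
def NSProperty (h : ℕ → ℕ) : Prop :=
  ∀ z z' i : ℕ, 1 ≤ i → z / 2 ^ i = z' / 2 ^ i →
    h z / 2 ^ (i - 1) = h z' / 2 ^ (i - 1)

lemma ns_bool_cancel_right {a b c : Bool} (h : a.xor b = c.xor b) : a = c := by
  revert h; cases a <;> cases b <;> cases c <;> decide

lemma ns_bool_cancel_left {a b c : Bool} (h : a.xor b = a.xor c) : b = c := by
  revert h; cases a <;> cases b <;> cases c <;> decide

/-- agreement of high bits from a division equality -/
lemma ns_aux_agree {a b i : ℕ} (H : a / 2 ^ i = b / 2 ^ i) :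
    ∀ j, i ≤ j → a.testBit j = b.testBit j := by
  intro j hj
  obtain ⟨d, rfl⟩ := Nat.exists_eq_add_of_le hj
  have : (a >>> i).testBit d = (b >>> i).testBit d := by
    rw [Nat.shiftRight_eq_div_pow, Nat.shiftRight_eq_div_pow, H]
  simpa [Nat.testBit_shiftRight] using this

/-- division equality from agreement of high bits -/
lemma ns_aux_div_eq {a b i : ℕ} (H : ∀ j, i ≤ j → a.testBit j = b.testBit j) :
    a / 2 ^ i = b / 2 ^ i := by
  rw [← Nat.shiftRight_eq_div_pow, ← Nat.shiftRight_eq_div_pow]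
  refine Nat.eq_of_testBit_eq fun j => ?_
  rw [Nat.testBit_shiftRight, Nat.testBit_shiftRight]
  exact H _ (Nat.le_add_right _ _)

/-- existence of the highest differing bit -/
lemma ns_aux_high_diff {a b : ℕ} (hab : a < b) :
    ∃ i, a.testBit i = false ∧ b.testBit i = true ∧
      ∀ j, i < j → a.testBit j = b.testBit j := by
  have hne : a ^^^ b ≠ 0 := by
    intro h0
    exact absurd (Nat.eq_of_testBit_eq fun j => by have := congrArg (Nat.testBit · j) h0; revert this; simp only [Nat.testBit_xor, Nat.zero_testBit]; cases a.testBit j <;> cases b.testBit j <;> simp) (Nat.ne_of_lt hab)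
  obtain ⟨i, hi, hi'⟩ := Nat.exists_most_significant_bit hne
  have hdiff : a.testBit i ≠ b.testBit i := by
    rw [Nat.testBit_xor] at hi
    intro h; rw [h] at hi; simp at hi
  have hagree : ∀ j, i < j → a.testBit j = b.testBit j := by
    intro j hj
    have := hi' j hj
    rw [Nat.testBit_xor] at this
    revert this
    cases a.testBit j <;> cases b.testBit j <;> simp
  refine ⟨i, ?_, ?_, hagree⟩ <;>
  · rcases Bool.eq_false_or_eq_true (a.testBit i) with ha | ha <;>
      rcases Bool.eq_false_or_eq_true (b.testBit i) with hb | hb <;>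
      first
        | (exfalso; exact hdiff (ha.trans hb.symm))
        | (exfalso
           exact absurd (Nat.lt_of_testBit i hb ha
             (fun j hj => (hagree j hj).symm)) (Nat.not_lt.mpr hab.le))
        | assumption

/-- NS property gives agreement of `h`-values on high bits -/
lemma ns_aux_h_agree {h : ℕ → ℕ} (hNS : NSProperty h) {w w' i : ℕ}
    (H : ∀ j, i < j → w.testBit j = w'.testBit j) :
    ∀ j, i ≤ j → (h w).testBit j = (h w').testBit j := by
  have hd : w / 2 ^ (i + 1) = w' / 2 ^ (i + 1) :=
    ns_aux_div_eq fun j hj => H j (by omega)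
  have := hNS w w' (i + 1) (by omega) hd
  simpa using ns_aux_agree this

/-- Key: if `w < z`, `h w < y ≤ h z`, and `i` is the highest differing bit of `w,z`,
then `y` and `h w` agree on all bits `≥ i`. -/
lemma ns_aux_key {h : ℕ → ℕ} (hNS : NSProperty h) {y z w i : ℕ}
    (hyz : y ≤ h z)
    (_hwi : w.testBit i = false) (_hzi : z.testBit i = true)
    (hagree : ∀ j, i < j → w.testBit j = z.testBit j)
    (hhw : h w < y) :
    ∀ j, i ≤ j → y.testBit j = (h w).testBit j := by
  -- h w and h z agree on bits ≥ i
  have hz_agree : ∀ j, i ≤ j → (h w).testBit j = (h z).testBit j :=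
    ns_aux_h_agree hNS hagree
  -- highest differing bit of (h w) and y
  obtain ⟨m, hm1, hm2, hm3⟩ := ns_aux_high_diff hhw
  -- claim m < i
  have hmi : m < i := by
    by_contra hmi
    push_neg at hmi
    -- then h z < y, contradiction
    have hzm : (h z).testBit m = false := (hz_agree m hmi).symm.trans hm1
    have : h z < y := Nat.lt_of_testBit m hzm hm2 fun j hj =>
      (hz_agree j (by omega)).symm.trans (hm3 j hj)
    omega
  intro j hj
  exact (hm3 j (by omega)).symm

/-- If `h` is monotonically increasing with the NS property and `y ≤ h z`, then
`{ y ⊕ (z-k) : k = 1,…,z } = { min(y, h(z-k)) ⊕ (z-k) : k = 1,…,z }`. -/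
theorem nimsum_set_eq_of_NS
    (h : ℕ → ℕ) (hmono : Monotone h) (hNS : NSProperty h)
    (y z : ℕ) (hyz : y ≤ h z) :
    {a | ∃ k, 1 ≤ k ∧ k ≤ z ∧ a = y ^^^ (z - k)} =
      {b | ∃ k, 1 ≤ k ∧ k ≤ z ∧ b = min y (h (z - k)) ^^^ (z - k)} := by
  -- reformulate using w = z - k < z
  have conv : ∀ c : ℕ → ℕ, ∀ a : ℕ,
      (∃ k, 1 ≤ k ∧ k ≤ z ∧ a = c (z - k) ^^^ (z - k)) ↔
      (∃ w, w < z ∧ a = c w ^^^ w) := by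
    intro c a
    constructor
    · rintro ⟨k, hk1, hk2, rfl⟩
      exact ⟨z - k, by omega, rfl⟩
    · rintro ⟨w, hw, rfl⟩
      exact ⟨z - w, by omega, by omega, by rw [Nat.sub_sub_self hw.le]⟩
  -- the two finset images
  set f : ℕ → ℕ := fun w => min y (h w) ^^^ w with hf
  set g : ℕ → ℕ := fun w => y ^^^ w with hg
  -- B ⊆ A constructively
  have hBA : ∀ w < z, ∃ w' < z, g w' = f w := by
    intro w hw
    rcases le_or_gt y (h w) with hy | hy
    · exact ⟨w, hw, by simp [hf, hg, min_eq_left hy]⟩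
    · obtain ⟨i, hwi, hzi, hagree⟩ := ns_aux_high_diff hw
      have hkey := ns_aux_key hNS hyz hwi hzi hagree hy
      refine ⟨w ^^^ (y ^^^ h w), ?_, ?_⟩
      · -- w' agrees with w on bits ≥ i, so w' < z
        have hbits : ∀ j, i ≤ j → (w ^^^ (y ^^^ h w)).testBit j = w.testBit j := by
          intro j hj
          rw [Nat.testBit_xor, Nat.testBit_xor, hkey j hj]
          simp
        refine Nat.lt_of_testBit i ((hbits i le_rfl).trans hwi) hzi fun j hj => ?_
        rw [hbits j hj.le]; exact hagree j hj
      · show y ^^^ (w ^^^ (y ^^^ h w)) = min y (h w) ^^^ w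
        rw [min_eq_right hy.le, Nat.xor_comm w (y ^^^ h w), ← Nat.xor_assoc,
          ← Nat.xor_assoc, Nat.xor_self, Nat.zero_xor]
  -- f is injective on range z
  have hinj : Set.InjOn f (Finset.range z : Finset ℕ) := by
    have main : ∀ w1 w2, w1 < w2 → w2 < z →
        min y (h w1) ^^^ w1 ≠ min y (h w2) ^^^ w2 := by
      intro w1 w2 h12 h2z hfeq
      obtain ⟨i, h1i, h2i, hagree⟩ := ns_aux_high_diff h12
      have hh_agree : ∀ j, i ≤ j → (h w1).testBit j = (h w2).testBit j :=
        ns_aux_h_agree hNS hagree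
      -- bit i of min y (h w1) equals bit i of min y (h w2)
      have hmin : (min y (h w1)).testBit i = (min y (h w2)).testBit i := by
        rcases le_or_gt y (h w1) with hy1 | hy1
        · have hy2 : y ≤ h w2 := hy1.trans (hmono h12.le)
          rw [min_eq_left hy1, min_eq_left hy2]
        · rcases le_or_gt y (h w2) with hy2 | hy2
          · -- mixed case: derive contradiction
            exfalso
            rw [min_eq_right hy1.le, min_eq_left hy2] at hfeq
            -- from hfeq, h w1 and y agree above i and differ at i
            have hbit : ∀ j, ((h w1).testBit j).xor (w1.testBit j)
                = (y.testBit j).xor (w2.testBit j) := by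
              intro j
              have := congrArg (fun n => n.testBit j) hfeq
              simpa [Nat.testBit_xor, Bool.xor] using this
            have habove : ∀ j, i < j → (h w1).testBit j = y.testBit j := by
              intro j hj
              have hb := hbit j
              rw [hagree j hj] at hb
              exact ns_bool_cancel_right hb
            have hati : (h w1).testBit i ≠ y.testBit i := by
              intro hsame
              have hb := hbit i
              rw [hsame] at hb
              have := ns_bool_cancel_left hb
              rw [h1i, h2i] at this
              exact Bool.false_ne_true this
            have hy_i : y.testBit i = true := by
              cases hyi : y.testBit i
              · exfalso
                cases hwi1 : (h w1).testBit i
                · exact hati (hwi1.trans hyi.symm)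
                · have : y < h w1 := Nat.lt_of_testBit i hyi hwi1
                    fun j hj => (habove j hj).symm
                  omega
              · rfl
            have h1_i : (h w1).testBit i = false := by
              cases hwi1 : (h w1).testBit i
              · rfl
              · exact absurd (hwi1.trans hy_i.symm) hati
            -- then h w2 < y, contradiction with hy2
            have : h w2 < y := Nat.lt_of_testBit i
              ((hh_agree i le_rfl).symm.trans h1_i) hy_i
              fun j hj => ((hh_agree j hj.le).symm.trans (habove j hj))
            omega
          · rw [min_eq_right hy1.le, min_eq_right hy2.le]
            exact hh_agree i le_rfl
      -- contradiction at bit i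
      have := congrArg (fun n => n.testBit i) hfeq
      simp only [Nat.testBit_xor] at this
      rw [hmin, h1i, h2i] at this
      simp at this
    intro w1 hw1 w2 hw2 hfeq
    simp only [Finset.coe_range, Set.mem_Iio] at hw1 hw2
    rcases lt_trichotomy w1 w2 with hlt | heq | hgt
    · exact absurd hfeq (main w1 w2 hlt hw2)
    · exact heq
    · exact absurd hfeq.symm (main w2 w1 hgt hw1)
  have hginj : Set.InjOn g (Finset.range z : Finset ℕ) := fun a _ b _ hab => by
    simpa [hg] using congrArg (fun n => y ^^^ n) hab
  -- finset image equality
  have himg : (Finset.range z).image f = (Finset.range z).image g := by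
    apply Finset.eq_of_subset_of_card_le
    · intro b hb
      simp only [Finset.mem_image, Finset.mem_range] at hb ⊢
      obtain ⟨w, hw, rfl⟩ := hb
      obtain ⟨w', hw', hgw⟩ := hBA w hw
      exact ⟨w', hw', hgw⟩
    · rw [Finset.card_image_of_injOn hginj, Finset.card_image_of_injOn hinj]
  -- conclude
  ext a
  simp only [Set.mem_setOf_eq]
  rw [conv (fun w => y) a, conv (fun w => min y (h w)) a]
  have hmem : ∀ c : ℕ → ℕ, (∃ w, w < z ∧ a = c w ^^^ w) ↔
      a ∈ (Finset.range z).image (fun w => c w ^^^ w) := by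
    intro c
    simp only [Finset.mem_image, Finset.mem_range]
    constructor
    · rintro ⟨w, hw, rfl⟩; exact ⟨w, hw, rfl⟩
    · rintro ⟨w, hw, rfl⟩; exact ⟨w, hw, rfl⟩
  rw [hmem, hmem]
  constructor
  · intro ha; rwa [← himg] at ha
  · intro ha; rwa [himg] at ha
end

section
/- For any k, h, i ∈ ℕ, one has k ⊕ h ⊕ i = mex({ (k−t) ⊕ h ⊕ i : t = 1, 2, …, k } ∪ { k ⊕ (h−t) ⊕ i : t = 1, 2, …, h } ∪ { k ⊕ h ⊕ (i−t) : t = 1, 2, …, i }). -/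
/-- The minimum excluded value of a set of natural numbers. -/
noncomputable def mex (S : Set ℕ) : ℕ := sInf {n | n ∉ S}

private lemma xor_left_comm' (a b c : ℕ) : a ^^^ (b ^^^ c) = b ^^^ (a ^^^ c) := by
  rw [← Nat.xor_assoc, Nat.xor_comm a b, Nat.xor_assoc]

/-- For any `k h i : ℕ`, the nim-sum `k ⊕ h ⊕ i` equals the mex of the set of
nim-sums obtained by strictly decreasing exactly one of `k`, `h`, `i`. -/
theorem nimsum_eq_mex_decrease (k h i : ℕ) :
    k ^^^ h ^^^ i =
      mex ({g | ∃ t, 1 ≤ t ∧ t ≤ k ∧ g = (k - t) ^^^ h ^^^ i} ∪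
           {g | ∃ t, 1 ≤ t ∧ t ≤ h ∧ g = k ^^^ (h - t) ^^^ i} ∪
           {g | ∃ t, 1 ≤ t ∧ t ≤ i ∧ g = k ^^^ h ^^^ (i - t)}) := by
  set S : Set ℕ :=
      ({g | ∃ t, 1 ≤ t ∧ t ≤ k ∧ g = (k - t) ^^^ h ^^^ i} ∪
       {g | ∃ t, 1 ≤ t ∧ t ≤ h ∧ g = k ^^^ (h - t) ^^^ i} ∪
       {g | ∃ t, 1 ≤ t ∧ t ≤ i ∧ g = k ^^^ h ^^^ (i - t)}) with hS
  have h1 : (k ^^^ h ^^^ i) ∉ S := by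
    rintro ((⟨t, ht1, ht2, heq⟩ | ⟨t, ht1, ht2, heq⟩) | ⟨t, ht1, ht2, heq⟩)
    · have : k = k - t := by
        have := heq
        rwa [Nat.xor_left_inj, Nat.xor_left_inj] at this
      omega
    · have : h = h - t := by
        rw [Nat.xor_assoc, Nat.xor_assoc, Nat.xor_right_inj, Nat.xor_left_inj] at heq
        exact heq
      omega
    · have : i = i - t := by
        rw [Nat.xor_assoc, Nat.xor_assoc, Nat.xor_right_inj, Nat.xor_right_inj] at heq
        exact heq
      omega
  have h2 : ∀ n, n < k ^^^ h ^^^ i → n ∈ S := by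
    intro n hn
    rcases Nat.lt_xor_cases hn with hc | hc
    · rcases Nat.lt_xor_cases hc with hk | hh
      · -- k' = n ^^^ i ^^^ h < k
        refine Or.inl (Or.inl ⟨k - (n ^^^ i ^^^ h), by omega, by omega, ?_⟩)
        have hk' : k - (k - (n ^^^ i ^^^ h)) = n ^^^ i ^^^ h := by omega
        rw [hk']
        simp [Nat.xor_assoc, Nat.xor_comm, xor_left_comm', Nat.xor_xor_cancel_left,
          Nat.xor_xor_cancel_right]
      · -- h' = n ^^^ i ^^^ k < h
        refine Or.inl (Or.inr ⟨h - (n ^^^ i ^^^ k), by omega, by omega, ?_⟩)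
        have hh' : h - (h - (n ^^^ i ^^^ k)) = n ^^^ i ^^^ k := by omega
        rw [hh']
        simp [Nat.xor_assoc, Nat.xor_comm, xor_left_comm', Nat.xor_xor_cancel_left,
          Nat.xor_xor_cancel_right]
    · -- i' = n ^^^ (k ^^^ h) < i
      refine Or.inr ⟨i - (n ^^^ (k ^^^ h)), by omega, by omega, ?_⟩
      have hi' : i - (i - (n ^^^ (k ^^^ h))) = n ^^^ (k ^^^ h) := by omega
      rw [hi']
      simp [Nat.xor_assoc, Nat.xor_comm, xor_left_comm', Nat.xor_xor_cancel_left,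
        Nat.xor_xor_cancel_right]
  unfold mex
  apply le_antisymm
  · by_contra hlt
    push_neg at hlt
    have hne : {n | n ∉ S}.Nonempty := ⟨_, h1⟩
    have hmem := Nat.sInf_mem hne
    exact hmem (h2 _ hlt)
  · exact Nat.sInf_le h1
end

section
/- Let i ∈ ℕ and let z, z' ∈ ℕ with z < z'. If ⌊z/2^i⌋ < ⌊z'/2^i⌋, then there exist c, s, t ∈ ℕ with s ≥ i and 0 ≤ t < 2^s such that z = c·2^(s+1) + t < c·2^(s+1) + 2^s ≤ z'. -/
/-- For `z < z'`, if `⌊z/2^i⌋ < ⌊z'/2^i⌋`, then there exist `c, s, t` with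
`s ≥ i`, `t < 2^s`, and `z = c·2^(s+1) + t < c·2^(s+1) + 2^s ≤ z'`. -/
theorem exists_of_floor_div_pow_lt (i z z' : ℕ) (hzz' : z < z')
    (hlt : z / 2 ^ i < z' / 2 ^ i) :
    ∃ c s t : ℕ, i ≤ s ∧ t < 2 ^ s ∧
      z = c * 2 ^ (s + 1) + t ∧
      z < c * 2 ^ (s + 1) + 2 ^ s ∧
      c * 2 ^ (s + 1) + 2 ^ s ≤ z' := by
  classical
  set P : ℕ → Prop := fun s => z / 2 ^ s < z' / 2 ^ s with hP
  have hb : ∀ s, P s → s ≤ z' := by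
    intro s hs
    by_contra h
    push_neg at h
    have h2 : z' < 2 ^ s := lt_of_lt_of_le h (Nat.le_of_lt ((Nat.lt_two_pow_self (n := s))))
    have h0 : z' / 2 ^ s = 0 := Nat.div_eq_of_lt h2
    have hs' : z / 2 ^ s < z' / 2 ^ s := hs
    rw [h0] at hs'
    exact Nat.not_lt_zero _ hs'
  have hi : i ≤ z' := hb i hlt
  set s := Nat.findGreatest P z' with hs
  have hPs : P s := Nat.findGreatest_spec hi hlt
  have his : i ≤ s := Nat.le_findGreatest hi hlt
  have hnot : ¬ P (s + 1) := by
    by_cases h : s + 1 ≤ z'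
    · exact Nat.findGreatest_is_greatest (Nat.lt_succ_self _) h
    · intro hp; exact h (hb _ hp)
  have key : z / 2 ^ (s + 1) = z' / 2 ^ (s + 1) :=
    le_antisymm (Nat.div_le_div_right hzz'.le) (not_lt.mp hnot)
  have hz : z / 2 ^ (s + 1) = (z / 2 ^ s) / 2 := by
    rw [pow_succ, Nat.div_div_eq_div_mul]
  have hz' : z' / 2 ^ (s + 1) = (z' / 2 ^ s) / 2 := by
    rw [pow_succ, Nat.div_div_eq_div_mul]
  set a := z / 2 ^ s with ha
  set b := z' / 2 ^ s with hbdef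
  have hab : a < b := hPs
  have habd : a / 2 = b / 2 := by rw [← hz, ← hz', key]
  have haeven : a % 2 = 0 ∧ b = a + 1 := by omega
  refine ⟨a / 2, s, z % 2 ^ s, his, Nat.mod_lt _ (Nat.pow_pos (by norm_num)), ?_, ?_, ?_⟩
  · have hdm : a * 2 ^ s + z % 2 ^ s = z := by rw [Nat.mul_comm]; exact Nat.div_add_mod z (2 ^ s)
    have hc : a / 2 * 2 ^ (s + 1) = a * 2 ^ s := by
      rw [pow_succ]
      have : a / 2 * 2 = a := by omega
      calc a / 2 * (2 ^ s * 2) = (a / 2 * 2) * 2 ^ s := by ring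
        _ = a * 2 ^ s := by rw [this]
    rw [hc]; omega
  · have hdm : a * 2 ^ s + z % 2 ^ s = z := by rw [Nat.mul_comm]; exact Nat.div_add_mod z (2 ^ s)
    have hc : a / 2 * 2 ^ (s + 1) = a * 2 ^ s := by
      rw [pow_succ]
      have : a / 2 * 2 = a := by omega
      calc a / 2 * (2 ^ s * 2) = (a / 2 * 2) * 2 ^ s := by ring
        _ = a * 2 ^ s := by rw [this]
    have hm : z % 2 ^ s < 2 ^ s := Nat.mod_lt _ (Nat.pow_pos (by norm_num))
    rw [hc]; omega
  · have hc : a / 2 * 2 ^ (s + 1) = a * 2 ^ s := by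
      rw [pow_succ]
      have : a / 2 * 2 = a := by omega
      calc a / 2 * (2 ^ s * 2) = (a / 2 * 2) * 2 ^ s := by ring
        _ = a * 2 ^ s := by rw [this]
    have hble : b * 2 ^ s ≤ z' := Nat.div_mul_le_self z' (2 ^ s)
    have : b * 2 ^ s = a * 2 ^ s + 2 ^ s := by
      rw [haeven.2]; ring
    rw [hc]; omega
end

section
/- Let s ≥ 1 and let x : Fin s → ℕ. Then x₁ ⊕ x₂ ⊕ ⋯ ⊕ x_s = mex( ⋃_{i=1}^{s} { x₁ ⊕ ⋯ ⊕ x_{i−1} ⊕ (x_i − k) ⊕ x_{i+1} ⊕ ⋯ ⊕ x_s : k = 1, 2, …, x_i } ); that is, the nim-sum of the coordinates equals the mex of the nim-sums obtained by strictly decreasing exactly one coordinate. -/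
/-- The nim-sum (bitwise XOR) of the coordinates of `x : Fin s → ℕ`. -/
def nimSum {s : ℕ} (x : Fin s → ℕ) : ℕ := (List.ofFn x).foldr (· ^^^ ·) 0

private lemma foldr_xor_set (l : List ℕ) (i : ℕ) (hi : i < l.length) (y : ℕ) :
    (l.set i y).foldr (· ^^^ ·) 0 = l.foldr (· ^^^ ·) 0 ^^^ l[i] ^^^ y := by
  induction l generalizing i with
  | nil => simp at hi
  | cons a t ih =>
    cases i with
    | zero =>
      simp only [List.set, List.foldr_cons, List.getElem_cons_zero]
      rw [Nat.xor_assoc, Nat.xor_comm a, Nat.xor_assoc, xor_cancel_left, Nat.xor_comm]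
    | succ n =>
      simp only [List.set, List.foldr_cons, List.getElem_cons_succ]
      rw [ih n (by simpa using hi)]
      simp [Nat.xor_assoc]

private lemma ofFn_update {s : ℕ} (x : Fin s → ℕ) (i : Fin s) (y : ℕ) :
    List.ofFn (Function.update x i y) = (List.ofFn x).set i y := by
  apply List.ext_getElem
  · simp
  · intro n h1 h2
    simp only [List.getElem_ofFn, List.getElem_set]
    by_cases h : (i : ℕ) = n
    · rw [if_pos h]
      have he : (⟨n, by simpa using h1⟩ : Fin s) = i := Fin.ext (by simp [h.symm])
      rw [he, Function.update_self]
    · rw [if_neg h, Function.update_of_ne (fun he => h ((congrArg Fin.val he).symm))]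

private lemma nimSum_update {s : ℕ} (x : Fin s → ℕ) (i : Fin s) (y : ℕ) :
    nimSum (Function.update x i y) = nimSum x ^^^ x i ^^^ y := by
  rw [nimSum, ofFn_update, foldr_xor_set _ _ (by simp)]
  simp [nimSum]

private lemma testBit_foldr_xor (p : ℕ) (l : List ℕ)
    (h : (l.foldr (· ^^^ ·) 0).testBit p = true) : ∃ a ∈ l, a.testBit p = true := by
  induction l with
  | nil => simp at h
  | cons a t ih =>
    simp only [List.foldr_cons, Nat.testBit_xor] at h
    cases hab : a.testBit p with
    | true => exact ⟨a, by simp, hab⟩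
    | false =>
      rw [hab, Bool.false_xor] at h
      obtain ⟨b, hb, hb'⟩ := ih h
      exact ⟨b, by simp [hb], hb'⟩

/-- The nim-sum of the coordinates equals the mex of the nim-sums obtained by
strictly decreasing exactly one coordinate. -/
theorem nimsum_eq_mex_decrease_multi (s : ℕ) (hs : 1 ≤ s) (x : Fin s → ℕ) :
    nimSum x =
      mex (⋃ i : Fin s,
        {g | ∃ k, 1 ≤ k ∧ k ≤ x i ∧
          g = nimSum (Function.update x i (x i - k))}) := by
  have bool_xor_false : ∀ a b : Bool, (a.xor b) = false → a = b := by decide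
  set N := nimSum x with hN
  set S : Set ℕ := (⋃ i : Fin s,
        {g | ∃ k, 1 ≤ k ∧ k ≤ x i ∧
          g = nimSum (Function.update x i (x i - k))}) with hS
  -- N ∉ S
  have hNS : N ∉ S := by
    rintro hmem
    simp only [hS, Set.mem_iUnion, Set.mem_setOf_eq] at hmem
    obtain ⟨i, k, hk1, hk2, hg⟩ := hmem
    rw [nimSum_update, Nat.xor_assoc] at hg
    have h0 : x i ^^^ (x i - k) = 0 := by
      have : N ^^^ 0 = N ^^^ (x i ^^^ (x i - k)) := by
        rw [Nat.xor_zero]; exact hg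
      exact (Nat.xor_right_inj.mp this).symm
    have := xor_eq_zero_iff.mp h0
    omega
  -- every m < N is in S
  have hlt : ∀ m < N, m ∈ S := by
    intro m hm
    set d := m ^^^ N with hd
    have hdne : d ≠ 0 := fun h => by
      have := xor_eq_zero_iff.mp h; omega
    obtain ⟨p, hp, hp'⟩ := Nat.exists_most_significant_bit hdne
    have hbits : ∀ j, p < j → m.testBit j = N.testBit j := by
      intro j hj
      apply bool_xor_false
      rw [← Nat.testBit_xor, ← hd]
      exact hp' j hj
    have hNp : N.testBit p = true := by
      by_contra h
      have hN0 : N.testBit p = false := Bool.eq_false_iff.mpr h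
      have hmp : m.testBit p = true := by
        have h1 := Nat.testBit_xor m N p
        rw [← hd, hp, hN0, Bool.xor_false] at h1
        exact h1.symm
      have : N < m := Nat.lt_of_testBit p (by simpa using h) hmp
        (fun j hj => (hbits j hj).symm)
      omega
    obtain ⟨a, ha, hap⟩ := testBit_foldr_xor p (List.ofFn x) hNp
    obtain ⟨i, rfl⟩ := List.mem_ofFn.mp ha
    set y := x i ^^^ d with hy
    have hylt : y < x i := by
      apply Nat.lt_of_testBit p
      · rw [hy, Nat.testBit_xor, hap, hp]; rfl
      · exact hap
      · intro j hj
        rw [hy, Nat.testBit_xor, hp' j hj, Bool.xor_false]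
    refine Set.mem_iUnion.mpr ⟨i, ⟨x i - y, by omega, by omega, ?_⟩⟩
    have hxy : x i - (x i - y) = y := by omega
    rw [hxy, nimSum_update, ← hN, hy, Nat.xor_assoc N, xor_cancel_left, hd,
      Nat.xor_comm m N, xor_cancel_left]
  -- conclude
  rw [mex]
  apply le_antisymm
  · apply le_csInf ⟨N, hNS⟩
    intro n hn
    by_contra h
    exact hn (hlt n (by omega))
  · exact Nat.sInf_le hNS
end

section
/- Fix an odd t ∈ ℕ. In two-pile Nim with a one-time pass not allowed when both piles have at most t stones, a position (x, y, p) with p ≤ F_t(x,y) is a P-position if and only if x ⊕ y ⊕ p = 0. -/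
/-- `passAvail t x y = 0` if both piles have at most `t` stones (pass not
allowed), and `1` otherwise; it bounds the pass-availability coordinate. -/
def passAvail (t x y : ℕ) : ℕ := if x ≤ t ∧ y ≤ t then 0 else 1

lemma passAvail_le_one (t x y : ℕ) : passAvail t x y ≤ 1 := by
  unfold passAvail; split <;> omega

lemma passAvail_eq_zero_iff {t x y : ℕ} :
    passAvail t x y = 0 ↔ x ≤ t ∧ y ≤ t := by
  unfold passAvail; split <;> simp_all

lemma xor1_even (k : ℕ) : (2*k) ^^^ 1 = 2*k+1 := by
  simpa [Nat.bit] using Nat.xor_bit false k true 0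

lemma xor1_odd (k : ℕ) : (2*k+1) ^^^ 1 = 2*k := by
  simpa [Nat.bit] using Nat.xor_bit true k true 0

lemma xor_one_le {t y : ℕ} (ht : Odd t) (hy : y ≤ t) : y ^^^ 1 ≤ t := by
  obtain ⟨s, hs⟩ := ht
  obtain ⟨k, hk | hk⟩ := Nat.even_or_odd' y <;> subst hk
  · rw [xor1_even]; omega
  · rw [xor1_odd]; omega

lemma xor_one_le_succ (y : ℕ) : y ^^^ 1 ≤ y + 1 := by
  obtain ⟨k, hk | hk⟩ := Nat.even_or_odd' y <;> subst hk
  · rw [xor1_even]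
  · rw [xor1_odd]; omega

lemma xor_one_xor (y : ℕ) : (y ^^^ 1) ^^^ y = 1 := by
  rw [Nat.xor_comm y 1, Nat.xor_xor_cancel_right]

lemma xor_one_lt {x y : ℕ} (hxy : y < x) (hne : x ^^^ y ≠ 1) : y ^^^ 1 < x := by
  have h1 : y ^^^ 1 ≤ x := le_trans (xor_one_le_succ y) hxy
  rcases lt_or_eq_of_le h1 with h | h
  · exact h
  · exact absurd (h ▸ xor_one_xor y) hne

/-- Two-pile Nim with a one-time pass, the pass not being allowed when both
piles have at most `t` stones, where `t` is odd: a position `(x, y, p)` with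
`p ≤ passAvail t x y` is a P-position iff `x ⊕ y ⊕ p = 0`. Here `P` is the
P-position predicate: a position is a P-position iff every move from it
(removing stones from a pile, adjusting pass availability, or using the pass)
leads to a non-P-position. -/
theorem two_pile_nim_with_pass (t : ℕ) (ht : Odd t)
    (P : ℕ → ℕ → ℕ → Prop)
    (hP : ∀ x y p : ℕ, P x y p ↔
      ((∀ u < x, ¬ P u y (min p (passAvail t u y))) ∧
       (∀ w < y, ¬ P x w (min p (passAvail t x w))) ∧
       (p = 1 → ¬ P x y 0))) :
    ∀ x y p : ℕ, p ≤ passAvail t x y →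
      (P x y p ↔ x ^^^ y ^^^ p = 0) := by
  suffices H : ∀ n x y p, x + y + p ≤ n → p ≤ passAvail t x y →
      (P x y p ↔ x ^^^ y ^^^ p = 0) by
    intro x y p hp; exact H (x+y+p) x y p le_rfl hp
  intro n
  induction n with
  | zero =>
    intro x y p hn hp
    have hx : x = 0 := by omega
    have hy : y = 0 := by omega
    have hpz : p = 0 := by omega
    subst hx; subst hy; subst hpz
    rw [hP]
    refine ⟨fun _ => rfl, fun _ =>
      ⟨fun u hu => absurd hu (by omega), fun w hw => absurd hw (by omega),
       fun h => absurd h (by omega)⟩⟩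
  | succ n ih =>
    intro x y p hn hp
    have hp1 : p ≤ 1 := le_trans hp (passAvail_le_one t x y)
    rw [hP]
    constructor
    · -- P-position conditions imply xor = 0
      rintro ⟨h1, h2, h3⟩
      by_contra hxor
      interval_cases p
      · -- p = 0 : x ≠ y
        simp only [Nat.xor_zero] at hxor
        have hne : x ≠ y := Nat.xor_ne_zero_iff.mp hxor
        rcases lt_or_gt_of_ne hne with hlt | hlt
        · -- x < y : move y down to x
          refine h2 x hlt ?_
          rw [Nat.min_eq_left (Nat.zero_le _),
            ih x x 0 (by omega) (Nat.zero_le _)]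
          simp
        · -- y < x : move x down to y
          refine h1 y hlt ?_
          rw [Nat.min_eq_left (Nat.zero_le _),
            ih y y 0 (by omega) (Nat.zero_le _)]
          simp
      · -- p = 1 : x ^^^ y ≠ 1
        have hpa : passAvail t x y = 1 := le_antisymm (passAvail_le_one t x y) hp
        have hnt : ¬ (x ≤ t ∧ y ≤ t) := fun h =>
          by simp [passAvail_eq_zero_iff.mpr h] at hpa
        have hne1 : x ^^^ y ≠ 1 := fun h => hxor (by rw [h]; rfl)
        rcases lt_trichotomy x y with hlt | heq | hlt
        · -- x < y
          by_cases hxt : x ≤ t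
          · -- reduce y to x; pass becomes unavailable
            refine h2 x hlt ?_
            have : passAvail t x x = 0 := passAvail_eq_zero_iff.mpr ⟨hxt, hxt⟩
            rw [this, Nat.min_eq_right (Nat.zero_le _),
              ih x x 0 (by omega) (Nat.zero_le _)]
            simp
          · -- x > t : reduce y to x ^^^ 1
            have hne1' : y ^^^ x ≠ 1 := by rw [Nat.xor_comm]; exact hne1
            have hw : x ^^^ 1 < y := xor_one_lt hlt hne1'
            refine h2 (x ^^^ 1) hw ?_
            have hpa' : passAvail t x (x ^^^ 1) = 1 := by
              unfold passAvail; rw [if_neg]; intro h; exact hxt h.1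
            rw [hpa', Nat.min_self,
              ih x (x ^^^ 1) 1 (by omega) (le_of_eq hpa'.symm)]
            rw [Nat.xor_xor_cancel_left]
            rfl
        · -- x = y : use the pass
          refine h3 rfl ?_
          rw [ih x y 0 (by omega) (Nat.zero_le _)]
          simp [heq]
        · -- y < x
          by_cases hyt : y ≤ t
          · refine h1 y hlt ?_
            have : passAvail t y y = 0 := passAvail_eq_zero_iff.mpr ⟨hyt, hyt⟩
            rw [this, Nat.min_eq_right (Nat.zero_le _),
              ih y y 0 (by omega) (Nat.zero_le _)]
            simp
          · have hu : y ^^^ 1 < x := xor_one_lt hlt hne1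
            refine h1 (y ^^^ 1) hu ?_
            have hpa' : passAvail t (y ^^^ 1) y = 1 := by
              unfold passAvail; rw [if_neg]; intro h; exact hyt h.2
            rw [hpa', Nat.min_self,
              ih (y ^^^ 1) y 1 (by omega) (le_of_eq hpa'.symm)]
            rw [xor_one_xor]
            rfl
    · -- xor = 0 implies the P-position conditions
      intro hxor
      have hxy : x ^^^ y = p := by
        have := Nat.xor_eq_zero_iff.mp hxor
        omega
      refine ⟨?_, ?_, ?_⟩
      · intro u hu hPu
        set p' := min p (passAvail t u y) with hp'
        have hp'le : p' ≤ passAvail t u y := Nat.min_le_right _ _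
        have hp'p : p' ≤ p := Nat.min_le_left _ _
        have huy : u ^^^ y = p' := by
          have h0 := (ih u y p' (by omega) hp'le).mp hPu
          have := Nat.xor_eq_zero_iff.mp h0
          omega
        rcases Nat.le_one_iff_eq_zero_or_eq_one.mp
            (le_trans hp'le (passAvail_le_one t u y)) with h0 | h1
        · -- p' = 0 : u = y
          have huy0 : u = y := Nat.xor_eq_zero_iff.mp (h0 ▸ huy)
          interval_cases p
          · exact absurd (Nat.xor_eq_zero_iff.mp hxy) (by omega)
          · -- p = 1, so passAvail t u y = 0, both ≤ t, but then x ≤ t too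
            have hmin : passAvail t u y = 0 := by
              rcases Nat.le_one_iff_eq_zero_or_eq_one.mp
                  (passAvail_le_one t u y) with h | h
              · exact h
              · rw [h] at hp'; simp [hp'] at h0
            obtain ⟨hut, hyt⟩ := passAvail_eq_zero_iff.mp hmin
            have hxval : x = y ^^^ 1 := by
              have : x ^^^ y ^^^ y = 1 ^^^ y := by rw [hxy]
              rw [Nat.xor_xor_cancel_right, Nat.xor_comm] at this
              exact this
            have hxt : x ≤ t := hxval ▸ xor_one_le ht hyt
            have : passAvail t x y = 0 := passAvail_eq_zero_iff.mpr ⟨hxt, hyt⟩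
            omega
        · -- p' = 1 : then p = 1 and u ^^^ y = x ^^^ y, so u = x
          have hpe : p = 1 := by omega
          have : u ^^^ y = x ^^^ y := by rw [huy, hxy, h1, hpe]
          have := Nat.xor_left_inj.mp this
          omega
      · intro w hw hPw
        set p' := min p (passAvail t x w) with hp'
        have hp'le : p' ≤ passAvail t x w := Nat.min_le_right _ _
        have hp'p : p' ≤ p := Nat.min_le_left _ _
        have hxw : x ^^^ w = p' := by
          have h0 := (ih x w p' (by omega) hp'le).mp hPw
          have := Nat.xor_eq_zero_iff.mp h0
          omega
        rcases Nat.le_one_iff_eq_zero_or_eq_one.mp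
            (le_trans hp'le (passAvail_le_one t x w)) with h0 | h1
        · have hxw0 : x = w := Nat.xor_eq_zero_iff.mp (h0 ▸ hxw)
          interval_cases p
          · exact absurd (Nat.xor_eq_zero_iff.mp hxy) (by omega)
          · have hmin : passAvail t x w = 0 := by
              rcases Nat.le_one_iff_eq_zero_or_eq_one.mp
                  (passAvail_le_one t x w) with h | h
              · exact h
              · rw [h] at hp'; simp [hp'] at h0
            obtain ⟨hxt, hwt⟩ := passAvail_eq_zero_iff.mp hmin
            have hyval : y = x ^^^ 1 := by
              have : x ^^^ (x ^^^ y) = x ^^^ 1 := by rw [hxy]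
              rw [Nat.xor_xor_cancel_left] at this
              exact this
            have hyt : y ≤ t := hyval ▸ xor_one_le ht hxt
            have : passAvail t x y = 0 := passAvail_eq_zero_iff.mpr ⟨hxt, hyt⟩
            omega
        · have hpe : p = 1 := by omega
          have : x ^^^ w = x ^^^ y := by rw [hxw, hxy, h1, hpe]
          have := Nat.xor_right_inj.mp this
          omega
      · intro hpe hP0
        have h0 := (ih x y 0 (by omega) (Nat.zero_le _)).mp hP0
        rw [Nat.xor_zero] at h0
        rw [hpe] at hxy
        omega
end

section
/- Fix an odd t ∈ ℕ. In three-pile Nim with a one-time pass not allowed when all three piles have at most t stones, a position (x, y, z, p) with p ≤ F_t(x,y,z) is a P-position if and only if x ⊕ y ⊕ z ⊕ p = 0. -/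
/-- `passAvail3 t x y z = 0` if all three piles have at most `t` stones (pass
not allowed), and `1` otherwise; it bounds the pass-availability coordinate. -/
def passAvail3 (t x y z : ℕ) : ℕ := if x ≤ t ∧ y ≤ t ∧ z ≤ t then 0 else 1

namespace ThreePileNimPassAux

theorem pa_le_one (t a b c : ℕ) : passAvail3 t a b c ≤ 1 := by
  unfold passAvail3; split <;> simp

theorem pa_eq_zero (t a b c : ℕ) :
    passAvail3 t a b c = 0 ↔ (a ≤ t ∧ b ≤ t ∧ c ≤ t) := by
  unfold passAvail3; split <;> simp_all

theorem pa_eq_one (t a b c : ℕ) :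
    passAvail3 t a b c = 1 ↔ ¬(a ≤ t ∧ b ≤ t ∧ c ≤ t) := by
  unfold passAvail3; split <;> simp_all

theorem pa_pos {t a b c : ℕ} (hp : 1 ≤ passAvail3 t a b c) :
    ¬(a ≤ t ∧ b ≤ t ∧ c ≤ t) := by
  intro h
  have := (pa_eq_zero t a b c).2 h
  omega

theorem pa_swap (t a b c : ℕ) : passAvail3 t a b c = passAvail3 t b a c := by
  unfold passAvail3; exact if_congr (by tauto) rfl rfl

theorem pa_rot (t a b c : ℕ) : passAvail3 t a b c = passAvail3 t c a b := by
  unfold passAvail3; exact if_congr (by tauto) rfl rfl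

theorem xor_left_comm (a b c : ℕ) : a ^^^ (b ^^^ c) = b ^^^ (a ^^^ c) := by
  rw [← Nat.xor_assoc, Nat.xor_comm a b, Nat.xor_assoc]

theorem xor_eq_iff {a m d : ℕ} : a ^^^ m = d ↔ a = m ^^^ d := by
  constructor
  · rintro rfl
    rw [Nat.xor_comm a m, Nat.xor_xor_cancel_left]
  · rintro rfl
    rw [Nat.xor_comm m d, Nat.xor_xor_cancel_right]

private theorem xor_one_of_mod (d e : ℕ)
    (he : (d % 2 = 0 → e = d + 1) ∧ (d % 2 = 1 → e = d - 1)) :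
    d ^^^ 1 = e := by
  apply Nat.eq_of_testBit_eq
  intro i
  rw [Nat.testBit_xor]
  have he' : e / 2 = d / 2 ∧ e % 2 ≠ d % 2 := by omega
  cases i with
  | zero =>
    simp only [Nat.testBit_zero, Nat.testBit_one_zero]
    rcases Nat.mod_two_eq_zero_or_one d with h | h <;> simp [h] <;> omega
  | succ i =>
    rw [show Nat.testBit 1 (i+1) = false by rw [Nat.testBit_add_one]; simp,
      Nat.testBit_add_one, Nat.testBit_add_one, he'.1]
    simp

theorem xor_one_even {d : ℕ} (h : d % 2 = 0) : d ^^^ 1 = d + 1 :=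
  xor_one_of_mod d _ ⟨fun _ => rfl, by omega⟩

theorem xor_one_odd {d : ℕ} (h : d % 2 = 1) : d ^^^ 1 = d - 1 :=
  xor_one_of_mod d _ ⟨by omega, fun _ => rfl⟩

theorem xor_one_cases (d : ℕ) : d ^^^ 1 = d + 1 ∨ (d ^^^ 1) + 1 = d := by
  rcases Nat.mod_two_eq_zero_or_one d with h | h
  · exact Or.inl (xor_one_even h)
  · right; rw [xor_one_odd h]; omega

theorem xor_one_le_iff {t : ℕ} (ht : Odd t) (v : ℕ) : v ^^^ 1 ≤ t ↔ v ≤ t := by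
  rw [Nat.odd_iff] at ht
  rcases Nat.mod_two_eq_zero_or_one v with h | h
  · rw [xor_one_even h]; omega
  · rw [xor_one_odd h]; omega

/-- From a zero-xor position, no single-pile move leads to a zero-xor position. -/
theorem noMove {t : ℕ} (ht : Odd t) {a b c p u : ℕ}
    (hp : p ≤ passAvail3 t a b c)
    (hQ : a ^^^ b ^^^ c ^^^ p = 0) (hu : u < a) :
    u ^^^ b ^^^ c ^^^ min p (passAvail3 t u b c) ≠ 0 := by
  intro h0
  have hp1 : p ≤ 1 := le_trans hp (pa_le_one t a b c)
  interval_cases p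
  · rw [Nat.zero_min, Nat.xor_zero] at h0
    rw [Nat.xor_zero] at hQ
    rw [Nat.xor_eq_zero_iff] at hQ h0
    have : u = a := Nat.xor_left_injective (h0.trans hQ.symm)
    omega
  · have hcond : ¬(a ≤ t ∧ b ≤ t ∧ c ≤ t) := pa_pos hp
    rw [Nat.xor_eq_zero_iff, Nat.xor_assoc, xor_eq_iff] at hQ
    -- hQ : a = (b ^^^ c) ^^^ 1
    rcases Nat.le_one_iff_eq_zero_or_eq_one.mp (pa_le_one t u b c) with h1 | h1
    · rw [h1, Nat.min_zero, Nat.xor_zero] at h0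
      rw [Nat.xor_eq_zero_iff, xor_eq_iff] at h0
      -- h0 : u = b ^^^ c
      have hub := (pa_eq_zero t u b c).1 h1
      have ha : a ≤ t := by
        rw [hQ, ← h0, xor_one_le_iff ht]
        exact hub.1
      exact hcond ⟨ha, hub.2.1, hub.2.2⟩
    · rw [h1, Nat.min_self] at h0
      rw [Nat.xor_eq_zero_iff, Nat.xor_assoc, xor_eq_iff] at h0
      -- h0 : u = (b ^^^ c) ^^^ 1
      omega

/-- From a nonzero-xor position with the pass available, a suitable pile move
to a zero-xor position exists, provided the pile is big enough. -/
theorem mkMove {t a b c : ℕ} (ht : Odd t)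
    (_hcond : ¬(a ≤ t ∧ b ≤ t ∧ c ≤ t))
    (h1 : b ^^^ c < a) (h2 : b ^^^ c ^^^ 1 < a) :
    ∃ u, u < a ∧ u ^^^ b ^^^ c ^^^ min 1 (passAvail3 t u b c) = 0 := by
  by_cases hall : b ^^^ c ^^^ 1 ≤ t ∧ b ≤ t ∧ c ≤ t
  · refine ⟨b ^^^ c, h1, ?_⟩
    have hbc : b ^^^ c ≤ t := (xor_one_le_iff ht _).1 hall.1
    have hpa : passAvail3 t (b ^^^ c) b c = 0 :=
      (pa_eq_zero t _ b c).2 ⟨hbc, hall.2.1, hall.2.2⟩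
    rw [hpa, Nat.min_zero]
    simp [Nat.xor_assoc, Nat.xor_comm, xor_left_comm]
  · refine ⟨b ^^^ c ^^^ 1, h2, ?_⟩
    have hpa : passAvail3 t (b ^^^ c ^^^ 1) b c = 1 := (pa_eq_one t _ b c).2 hall
    rw [hpa, Nat.min_self]
    simp [Nat.xor_assoc, Nat.xor_comm, xor_left_comm]

end ThreePileNimPassAux

open ThreePileNimPassAux in
/-- Three-pile Nim with a one-time pass, the pass not being allowed when all
three piles have at most `t` stones, where `t` is odd: a position
`(x, y, z, p)` with `p ≤ passAvail3 t x y z` is a P-position iff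
`x ⊕ y ⊕ z ⊕ p = 0`. Here `P` is the P-position predicate: a position is a
P-position iff every move from it (removing stones from a pile, adjusting pass
availability, or using the pass) leads to a non-P-position. -/
theorem three_pile_nim_with_pass (t : ℕ) (ht : Odd t)
    (P : ℕ → ℕ → ℕ → ℕ → Prop)
    (hP : ∀ x y z p : ℕ, P x y z p ↔
      ((∀ u < x, ¬ P u y z (min p (passAvail3 t u y z))) ∧
       (∀ w < y, ¬ P x w z (min p (passAvail3 t x w z))) ∧
       (∀ v < z, ¬ P x y v (min p (passAvail3 t x y v))) ∧
       (p = 1 → ¬ P x y z 0))) :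
    ∀ x y z p : ℕ, p ≤ passAvail3 t x y z →
      (P x y z p ↔ x ^^^ y ^^^ z ^^^ p = 0) := by
  have key : ∀ n x y z p : ℕ, x + y + z + p ≤ n → p ≤ passAvail3 t x y z →
      (P x y z p ↔ x ^^^ y ^^^ z ^^^ p = 0) := by
    intro n
    induction n with
    | zero =>
      intro x y z p hn hp
      obtain ⟨rfl, rfl, rfl, rfl⟩ : x = 0 ∧ y = 0 ∧ z = 0 ∧ p = 0 := by omega
      rw [hP]
      simp
    | succ n ih =>
      intro x y z p hn hp
      constructor
      · -- P → xor = 0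
        intro hPx
        by_contra hQ
        rw [hP] at hPx
        obtain ⟨hx, hy, hz, hpass⟩ := hPx
        have hp1 : p ≤ 1 := le_trans hp (pa_le_one t x y z)
        interval_cases p
        · -- p = 0
          rw [Nat.xor_zero] at hQ
          rcases Nat.xor_trichotomy hQ with h | h | h
          · apply hx (y ^^^ z) h
            rw [Nat.zero_min]
            exact (ih _ y z 0 (by omega) (Nat.zero_le _)).2
              (by simp [Nat.xor_assoc, Nat.xor_comm, xor_left_comm])
          · apply hy (z ^^^ x) h
            rw [Nat.zero_min]
            exact (ih x _ z 0 (by omega) (Nat.zero_le _)).2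
              (by simp [Nat.xor_assoc, Nat.xor_comm, xor_left_comm])
          · apply hz (x ^^^ y) h
            rw [Nat.zero_min]
            exact (ih x y _ 0 (by omega) (Nat.zero_le _)).2
              (by simp [Nat.xor_assoc, Nat.xor_comm, xor_left_comm])
        · -- p = 1
          have hcnd : ¬(x ≤ t ∧ y ≤ t ∧ z ≤ t) := pa_pos hp
          rw [Nat.xor_eq_zero_iff] at hQ
          -- hQ : ¬ (x ^^^ y ^^^ z = 1)
          by_cases hm0 : x ^^^ y ^^^ z = 0
          · apply hpass rfl
            exact (ih x y z 0 (by omega) (Nat.zero_le _)).2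
              (by rw [Nat.xor_zero, hm0])
          · have htr : x ^^^ y ^^^ (z ^^^ 1) ≠ 0 := by
              rw [← Nat.xor_assoc, ne_eq, Nat.xor_eq_zero_iff]
              exact hQ
            rcases Nat.xor_trichotomy htr with h | h | h
            · -- move in pile x
              have h2 : y ^^^ z ^^^ 1 < x := by rw [Nat.xor_assoc]; exact h
              have hne : y ^^^ z ≠ x := by
                intro he
                exact hm0 (by rw [← he]; simp [Nat.xor_assoc, Nat.xor_comm, xor_left_comm])
              have h1 : y ^^^ z < x := by
                rcases xor_one_cases (y ^^^ z) with hc | hc <;> omega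
              obtain ⟨u, hu, hxor⟩ := mkMove ht hcnd h1 h2
              apply hx u hu
              exact (ih u y z _
                (by have := Nat.min_le_left 1 (passAvail3 t u y z); omega)
                (Nat.min_le_right _ _)).2 hxor
            · -- move in pile y
              have h2 : x ^^^ z ^^^ 1 < y := by
                rw [Nat.xor_assoc, Nat.xor_comm x (z ^^^ 1)]; exact h
              have hne : x ^^^ z ≠ y := by
                intro he
                exact hm0 (by rw [← he]; simp [Nat.xor_assoc, Nat.xor_comm, xor_left_comm])
              have h1 : x ^^^ z < y := by
                rcases xor_one_cases (x ^^^ z) with hc | hc <;> omega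
              have hcnd' : ¬(y ≤ t ∧ x ≤ t ∧ z ≤ t) := by tauto
              obtain ⟨u, hu, hxor⟩ := mkMove ht hcnd' h1 h2
              apply hy u hu
              refine (ih x u z _
                (by have := Nat.min_le_left 1 (passAvail3 t x u z); omega)
                (Nat.min_le_right _ _)).2 ?_
              rw [Nat.xor_comm x u, pa_swap t x u z]
              exact hxor
            · -- move in pile z
              have hne1 : x ^^^ y ≠ z := by
                intro he
                exact hm0 (by rw [← he]; simp [Nat.xor_assoc, Nat.xor_comm, xor_left_comm])
              have hne2 : x ^^^ y ^^^ 1 ≠ z := by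
                intro he
                exact hQ (by rw [← he, Nat.xor_xor_cancel_left])
              have h12 : x ^^^ y < z ∧ x ^^^ y ^^^ 1 < z := by
                rcases xor_one_cases (x ^^^ y) with hc | hc <;>
                  rcases xor_one_cases z with hz' | hz' <;> omega
              have hcnd' : ¬(z ≤ t ∧ x ≤ t ∧ y ≤ t) := by tauto
              obtain ⟨u, hu, hxor⟩ := mkMove ht hcnd' h12.1 h12.2
              apply hz u hu
              refine (ih x y u _
                (by have := Nat.min_le_left 1 (passAvail3 t x y u); omega)
                (Nat.min_le_right _ _)).2 ?_
              rw [pa_rot t x y u, Nat.xor_comm (x ^^^ y) u, ← Nat.xor_assoc]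
              exact hxor
      · -- xor = 0 → P
        intro hQ
        rw [hP]
        refine ⟨?_, ?_, ?_, ?_⟩
        · intro u hu
          rw [ih u y z _
            (by have := Nat.min_le_left p (passAvail3 t u y z); omega)
            (Nat.min_le_right _ _)]
          exact noMove ht hp hQ hu
        · intro w hw
          rw [ih x w z _
            (by have := Nat.min_le_left p (passAvail3 t x w z); omega)
            (Nat.min_le_right _ _)]
          have hp' : p ≤ passAvail3 t y x z := by rw [← pa_swap]; exact hp
          have hQ' : y ^^^ x ^^^ z ^^^ p = 0 := by rw [Nat.xor_comm y x]; exact hQ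
          have := noMove ht hp' hQ' hw
          rw [Nat.xor_comm x w, pa_swap t x w z]
          exact this
        · intro v hv
          rw [ih x y v _
            (by have := Nat.min_le_left p (passAvail3 t x y v); omega)
            (Nat.min_le_right _ _)]
          have hp' : p ≤ passAvail3 t z x y := by rw [← pa_rot]; exact hp
          have hQ' : z ^^^ x ^^^ y ^^^ p = 0 := by
            rw [Nat.xor_comm z x, Nat.xor_assoc x z y, Nat.xor_comm z y,
              ← Nat.xor_assoc]
            exact hQ
          have := noMove ht hp' hQ' hv
          rw [pa_rot t x y v, Nat.xor_comm (x ^^^ y) v, ← Nat.xor_assoc]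
          exact this
        · rintro rfl
          rw [ih x y z 0 (by omega) (Nat.zero_le _), Nat.xor_zero]
          rw [Nat.xor_eq_zero_iff] at hQ
          omega
  intro x y z p hp
  exact key (x + y + z + p) x y z p le_rfl hp
end
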